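/- Let B1 and B2 be combinatorially perfect I-crystals (with respect to fixed positive integers (a_i^∨)_{i∈I} satisfying a_0^∨ = 1) with lev(B1) ≤ lev(B2). Then an element b1 ⊗ b2 ∈ B1 ⊗ B2 belongs to (B1 ⊗ B2)_min if and only if b2 ∈ (B2)_min and ε_i(b2) ≥ φ_i(b1) for all i ∈ I. Moreover, in this case ε_i(b1 ⊗ b2) = ε_i(b2) + ε_i(b1) − φ_i(b1) and φ_i(b1 ⊗ b2) = φ_i(b2) for all i ∈ I. -/

import Mathlib

/-- An `I`-crystal on a carrier `B`: raising/lowering operators `e i, f i : B → B ⊔ {0}`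
(encoded via `Option B`), mutually inverse where defined, with all strings finite. -/
structure Crystal (I : Type*) (B : Type*) where
  e : I → B → Option B
  f : I → B → Option B
  ef : ∀ (i : I) (b b' : B), e i b = some b' → f i b' = some b
  fe : ∀ (i : I) (b b' : B), f i b = some b' → e i b' = some b
  e_bounded : ∀ (i : I) (b : B), ∃ k : ℕ, (fun o => o.bind (e i))^[k] (some b) = none
  f_bounded : ∀ (i : I) (b : B), ∃ k : ℕ, (fun o => o.bind (f i))^[k] (some b) = none

/-- The largest `k` such that `e^k b ≠ 0`, for a partial map `e : B → B ⊔ {0}`. -/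
noncomputable def epsOf {B : Type*} (e : B → Option B) (b : B) : ℕ :=
  sSup {k : ℕ | (fun o => o.bind e)^[k] (some b) ≠ none}

/-- `ε_i(b) = max {k ≥ 0 | e_i^k b ≠ 0}`. -/
noncomputable def Crystal.eps {I B : Type*} (c : Crystal I B) (i : I) (b : B) : ℕ :=
  epsOf (c.e i) b

/-- `φ_i(b) = max {k ≥ 0 | f_i^k b ≠ 0}`. -/
noncomputable def Crystal.phi {I B : Type*} (c : Crystal I B) (i : I) (b : B) : ℕ :=
  epsOf (c.f i) b

section Aux

variable {B : Type*}

lemma stepN (e : B → Option B) (k : ℕ) :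
    (fun o : Option B => o.bind e)^[k] none = none :=
  Function.iterate_fixed rfl k

lemma stepMono (e : B → Option B) {k m : ℕ} (hkm : k ≤ m) {x : Option B}
    (h : (fun o : Option B => o.bind e)^[k] x = none) :
    (fun o : Option B => o.bind e)^[m] x = none := by
  obtain ⟨j, rfl⟩ := Nat.exists_eq_add_of_le hkm
  rw [Nat.add_comm, Function.iterate_add_apply, h, stepN]

lemma stepShift (e : B → Option B) (b : B) (k : ℕ) :
    (fun o : Option B => o.bind e)^[k+1] (some b) = (fun o : Option B => o.bind e)^[k] (e b) := by
  rw [Function.iterate_succ_apply]; rfl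

lemma epsOf_eq (e : B → Option B) (b : B) (n : ℕ)
    (h1 : (fun o : Option B => o.bind e)^[n] (some b) ≠ none)
    (h2 : (fun o : Option B => o.bind e)^[n+1] (some b) = none) :
    epsOf e b = n := by
  have hub : ∀ k ∈ {k : ℕ | (fun o : Option B => o.bind e)^[k] (some b) ≠ none}, k ≤ n := by
    intro k hk
    by_contra hlt
    exact hk (stepMono e (by omega) h2)
  exact le_antisymm (csSup_le ⟨n, h1⟩ hub) (le_csSup ⟨n, hub⟩ h1)

lemma epsOf_spec (e : B → Option B) (b : B)
    (hb : ∃ k, (fun o : Option B => o.bind e)^[k] (some b) = none) :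
    (fun o : Option B => o.bind e)^[epsOf e b] (some b) ≠ none ∧
    (fun o : Option B => o.bind e)^[epsOf e b + 1] (some b) = none := by
  obtain ⟨k, hk⟩ := hb
  have hub : ∀ j ∈ {j : ℕ | (fun o : Option B => o.bind e)^[j] (some b) ≠ none}, j ≤ k := by
    intro j hj
    by_contra hlt
    exact hj (stepMono e (by omega) hk)
  have hne : (0:ℕ) ∈ {j : ℕ | (fun o : Option B => o.bind e)^[j] (some b) ≠ none} := by simp
  have hmem : epsOf e b ∈ {j : ℕ | (fun o : Option B => o.bind e)^[j] (some b) ≠ none} :=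
    Nat.sSup_mem ⟨0, hne⟩ ⟨k, hub⟩
  refine ⟨hmem, ?_⟩
  by_contra h
  have h' : epsOf e b + 1 ≤ epsOf e b := le_csSup ⟨k, hub⟩ h
  omega

lemma epsOf_none (e : B → Option B) {b : B} (he : e b = none) : epsOf e b = 0 := by
  apply epsOf_eq e b 0 (by simp)
  rw [stepShift, he]; rfl

lemma epsOf_succ (e : B → Option B) {b b' : B} (he : e b = some b')
    (hb : ∃ k, (fun o : Option B => o.bind e)^[k] (some b') = none) :
    epsOf e b = epsOf e b' + 1 := by
  obtain ⟨h1, h2⟩ := epsOf_spec e b' hb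
  apply epsOf_eq
  · rw [stepShift, he]; exact h1
  · rw [stepShift, he]; exact h2

lemma epsOf_eq_of (e : B → Option B) (h : B → ℕ)
    (h0 : ∀ b, e b = none → h b = 0)
    (hs : ∀ b b', e b = some b' → h b = h b' + 1) (b : B) :
    epsOf e b = h b := by
  suffices key : ∀ n (b : B), h b = n →
      (fun o : Option B => o.bind e)^[n] (some b) ≠ none ∧
      (fun o : Option B => o.bind e)^[n+1] (some b) = none by
    obtain ⟨k1, k2⟩ := key (h b) b rfl
    exact epsOf_eq e b (h b) k1 k2
  intro n
  induction n with
  | zero =>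
    intro b hb
    refine ⟨by simp, ?_⟩
    cases he : e b with
    | none => rw [stepShift, he]; rfl
    | some b' => exfalso; have := hs b b' he; omega
  | succ n ih =>
    intro b hb
    cases he : e b with
    | none => exfalso; have := h0 b he; omega
    | some b' =>
      have hb' : h b' = n := by have := hs b b' he; omega
      obtain ⟨ih1, ih2⟩ := ih b' hb'
      exact ⟨by rw [stepShift, he]; exact ih1, by rw [stepShift, he]; exact ih2⟩

end Aux

/-- The raising operators of the tensor product crystal `B1 ⊗ B2`. -/
noncomputable def tensorE {I B1 B2 : Type*} (c1 : Crystal I B1) (c2 : Crystal I B2)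
    (i : I) (p : B1 × B2) : Option (B1 × B2) :=
  if c2.eps i p.2 ≤ c1.phi i p.1 then (c1.e i p.1).map (fun x => (x, p.2))
  else (c2.e i p.2).map (fun x => (p.1, x))

/-- The lowering operators of the tensor product crystal `B1 ⊗ B2`. -/
noncomputable def tensorF {I B1 B2 : Type*} (c1 : Crystal I B1) (c2 : Crystal I B2)
    (i : I) (p : B1 × B2) : Option (B1 × B2) :=
  if c2.eps i p.2 < c1.phi i p.1 then (c1.f i p.1).map (fun x => (x, p.2))
  else (c2.f i p.2).map (fun x => (p.1, x))

/-- `⟨ε(b), K⟩ = Σ_i a_i^∨ ε_i(b)`, the level of the weight `ε(b)`. -/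
noncomputable def levK {I B : Type*} [Fintype I] (a : I → ℕ) (c : Crystal I B) (b : B) : ℕ :=
  ∑ i, a i * c.eps i b

/-- `lev(B) = min_{b ∈ B} ⟨ε(b), K⟩`. -/
noncomputable def lev {I B : Type*} [Fintype I] (a : I → ℕ) (c : Crystal I B) : ℕ :=
  sInf (Set.range (levK a c))

/-- A level-zero crystal `B` is combinatorially perfect of level `l` if it is finite and
nonempty, `lev(B) = l`, and `ε` and `φ` restrict to bijections from
`B_min = {b | ⟨ε(b), K⟩ = l}` onto `{λ ∈ ℤ_{≥0}^I | ⟨λ, K⟩ = l}`. -/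
structure IsPerfect {I B : Type*} [Fintype I] (a : I → ℕ) (c : Crystal I B) (l : ℕ) : Prop where
  finite : Finite B
  nonempty : Nonempty B
  level_zero : ∀ b : B, (∑ i, a i * c.eps i b) = ∑ i, a i * c.phi i b
  lev_eq : lev a c = l
  eps_bij : Set.BijOn (fun b i => c.eps i b)
    {b | levK a c b = l} {lam : I → ℕ | ∑ i, a i * lam i = l}
  phi_bij : Set.BijOn (fun b i => c.phi i b)
    {b | levK a c b = l} {lam : I → ℕ | ∑ i, a i * lam i = l}

/-- The level of the tensor product crystal `B1 ⊗ B2`. -/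
noncomputable def tensorLev {I B1 B2 : Type*} [Fintype I] (a : I → ℕ)
    (c1 : Crystal I B1) (c2 : Crystal I B2) : ℕ :=
  sInf (Set.range (fun p : B1 × B2 => ∑ i, a i * epsOf (tensorE c1 c2 i) p))


section CrystalAux
variable {I B : Type*}

lemma Crystal.eps_eq_zero (c : Crystal I B) (i : I) {b : B} (he : c.e i b = none) :
    c.eps i b = 0 := epsOf_none _ he

lemma Crystal.eps_eq_succ (c : Crystal I B) (i : I) {b b' : B} (he : c.e i b = some b') :
    c.eps i b = c.eps i b' + 1 := epsOf_succ _ he (c.e_bounded i b')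

lemma Crystal.phi_eq_zero (c : Crystal I B) (i : I) {b : B} (hf : c.f i b = none) :
    c.phi i b = 0 := epsOf_none _ hf

lemma Crystal.phi_eq_succ (c : Crystal I B) (i : I) {b b' : B} (hf : c.f i b = some b') :
    c.phi i b = c.phi i b' + 1 := epsOf_succ _ hf (c.f_bounded i b')

lemma Crystal.phi_e (c : Crystal I B) (i : I) {b b' : B} (he : c.e i b = some b') :
    c.phi i b' = c.phi i b + 1 := c.phi_eq_succ i (c.ef i b b' he)

lemma Crystal.eps_f (c : Crystal I B) (i : I) {b b' : B} (hf : c.f i b = some b') :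
    c.eps i b' = c.eps i b + 1 := c.eps_eq_succ i (c.fe i b b' hf)

end CrystalAux

section TensorAux
variable {I B1 B2 : Type*}

lemma epsOf_tensorE (c1 : Crystal I B1) (c2 : Crystal I B2) (i : I) (p : B1 × B2) :
    epsOf (tensorE c1 c2 i) p = c1.eps i p.1 + (c2.eps i p.2 - c1.phi i p.1) := by
  apply epsOf_eq_of (tensorE c1 c2 i)
      (fun p => c1.eps i p.1 + (c2.eps i p.2 - c1.phi i p.1))
  · rintro ⟨x1, x2⟩ hnone
    simp only [tensorE] at hnone ⊢
    split_ifs at hnone with hc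
    · rw [Option.map_eq_none_iff] at hnone
      have h1 := c1.eps_eq_zero i hnone
      omega
    · rw [Option.map_eq_none_iff] at hnone
      have h2 := c2.eps_eq_zero i hnone
      omega
  · rintro ⟨x1, x2⟩ ⟨y1, y2⟩ hsome
    simp only [tensorE] at hsome ⊢
    split_ifs at hsome with hc
    · rw [Option.map_eq_some_iff] at hsome
      obtain ⟨x, hx, hxy⟩ := hsome
      injection hxy with hA hB
      subst hA; subst hB
      have hEq := c1.eps_eq_succ i hx
      have hPq := c1.phi_e i hx
      omega
    · rw [Option.map_eq_some_iff] at hsome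
      obtain ⟨x, hx, hxy⟩ := hsome
      injection hxy with hA hB
      subst hA; subst hB
      have hEq := c2.eps_eq_succ i hx
      omega

lemma epsOf_tensorF (c1 : Crystal I B1) (c2 : Crystal I B2) (i : I) (p : B1 × B2) :
    epsOf (tensorF c1 c2 i) p = c2.phi i p.2 + (c1.phi i p.1 - c2.eps i p.2) := by
  apply epsOf_eq_of (tensorF c1 c2 i)
      (fun p => c2.phi i p.2 + (c1.phi i p.1 - c2.eps i p.2))
  · rintro ⟨x1, x2⟩ hnone
    simp only [tensorF] at hnone ⊢
    split_ifs at hnone with hc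
    · rw [Option.map_eq_none_iff] at hnone
      have h1 := c1.phi_eq_zero i hnone
      omega
    · rw [Option.map_eq_none_iff] at hnone
      have h2 := c2.phi_eq_zero i hnone
      omega
  · rintro ⟨x1, x2⟩ ⟨y1, y2⟩ hsome
    simp only [tensorF] at hsome ⊢
    split_ifs at hsome with hc
    · rw [Option.map_eq_some_iff] at hsome
      obtain ⟨x, hx, hxy⟩ := hsome
      injection hxy with hA hB
      subst hA; subst hB
      have hPq := c1.phi_eq_succ i hx
      omega
    · rw [Option.map_eq_some_iff] at hsome
      obtain ⟨x, hx, hxy⟩ := hsome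
      injection hxy with hA hB
      subst hA; subst hB
      have hPq := c2.phi_eq_succ i hx
      have hEq := c2.eps_f i hx
      omega

end TensorAux

/-- for perfect crystals with `lev(B1) ≤ lev(B2)`, `b1 ⊗ b2` is minimal in
`B1 ⊗ B2` iff `b2 ∈ (B2)_min` and `ε_i(b2) ≥ φ_i(b1)` for all `i`; in that case
`ε_i(b1 ⊗ b2) = ε_i(b2) + ε_i(b1) − φ_i(b1)` and `φ_i(b1 ⊗ b2) = φ_i(b2)`. -/
theorem tensor_min_of_right_higher {I B1 B2 : Type*} [Fintype I] (i0 : I) (a : I → ℕ)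
    (ha : ∀ i, 0 < a i) (ha0 : a i0 = 1)
    (c1 : Crystal I B1) (c2 : Crystal I B2) (l1 l2 : ℕ)
    (h1 : IsPerfect a c1 l1) (h2 : IsPerfect a c2 l2) (hle : l1 ≤ l2)
    (b1 : B1) (b2 : B2) :
    ((∑ i, a i * epsOf (tensorE c1 c2 i) (b1, b2)) = tensorLev a c1 c2 ↔
        levK a c2 b2 = lev a c2 ∧ ∀ i, c1.phi i b1 ≤ c2.eps i b2) ∧
      ((∑ i, a i * epsOf (tensorE c1 c2 i) (b1, b2)) = tensorLev a c1 c2 →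
        ∀ i, (epsOf (tensorE c1 c2 i) (b1, b2) : ℤ)
            = (c2.eps i b2 : ℤ) + (c1.eps i b1 : ℤ) - (c1.phi i b1 : ℤ) ∧
          epsOf (tensorF c1 c2 i) (b1, b2) = c2.phi i b2) := by
  classical
  haveI : Nonempty B1 := h1.nonempty
  haveI : Nonempty B2 := h2.nonempty
  have hE : ∀ (x1 : B1) (x2 : B2) (i : I),
      epsOf (tensorE c1 c2 i) (x1, x2) = c1.eps i x1 + (c2.eps i x2 - c1.phi i x1) :=
    fun x1 x2 i => epsOf_tensorE c1 c2 i (x1, x2)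
  have hF : ∀ (x1 : B1) (x2 : B2) (i : I),
      epsOf (tensorF c1 c2 i) (x1, x2) = c2.phi i x2 + (c1.phi i x1 - c2.eps i x2) :=
    fun x1 x2 i => epsOf_tensorF c1 c2 i (x1, x2)
  have term_le : ∀ (x1 : B1) (x2 : B2) (i : I),
      a i * c1.eps i x1 + a i * c2.eps i x2
        ≤ a i * epsOf (tensorE c1 c2 i) (x1, x2) + a i * c1.phi i x1 := by
    intro x1 x2 i
    rw [hE x1 x2 i]
    calc a i * c1.eps i x1 + a i * c2.eps i x2
        = a i * (c1.eps i x1 + c2.eps i x2) := by ring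
      _ ≤ a i * (c1.eps i x1 + (c2.eps i x2 - c1.phi i x1) + c1.phi i x1) :=
          Nat.mul_le_mul_left _ (by omega)
      _ = a i * (c1.eps i x1 + (c2.eps i x2 - c1.phi i x1)) + a i * c1.phi i x1 := by ring
  have sumIneq : ∀ (x1 : B1) (x2 : B2),
      (∑ i, a i * c1.eps i x1) + ∑ i, a i * c2.eps i x2
        ≤ (∑ i, a i * epsOf (tensorE c1 c2 i) (x1, x2)) + ∑ i, a i * c1.phi i x1 := by
    intro x1 x2
    rw [← Finset.sum_add_distrib, ← Finset.sum_add_distrib]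
    exact Finset.sum_le_sum fun i _ => term_le x1 x2 i
  have sumEq : ∀ (x1 : B1) (x2 : B2), (∀ i, c1.phi i x1 ≤ c2.eps i x2) →
      (∑ i, a i * epsOf (tensorE c1 c2 i) (x1, x2)) + ∑ i, a i * c1.phi i x1
        = (∑ i, a i * c1.eps i x1) + ∑ i, a i * c2.eps i x2 := by
    intro x1 x2 hle'
    rw [← Finset.sum_add_distrib, ← Finset.sum_add_distrib]
    refine Finset.sum_congr rfl fun i _ => ?_
    rw [hE x1 x2 i]
    have h' : c1.eps i x1 + (c2.eps i x2 - c1.phi i x1) + c1.phi i x1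
        = c1.eps i x1 + c2.eps i x2 := by have := hle' i; omega
    calc a i * (c1.eps i x1 + (c2.eps i x2 - c1.phi i x1)) + a i * c1.phi i x1
        = a i * (c1.eps i x1 + (c2.eps i x2 - c1.phi i x1) + c1.phi i x1) := by ring
      _ = a i * (c1.eps i x1 + c2.eps i x2) := by rw [h']
      _ = a i * c1.eps i x1 + a i * c2.eps i x2 := by ring
  have lz1 : ∀ x1 : B1, ∑ i, a i * c1.phi i x1 = ∑ i, a i * c1.eps i x1 :=
    fun x1 => (h1.level_zero x1).symm
  have hlev2 : ∀ x2 : B2, l2 ≤ ∑ i, a i * c2.eps i x2 := by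
    intro x2
    have hx : lev a c2 ≤ ∑ i, a i * c2.eps i x2 := Nat.sInf_le ⟨x2, rfl⟩
    rw [h2.lev_eq] at hx
    exact hx
  have lower : ∀ (x1 : B1) (x2 : B2),
      l2 ≤ ∑ i, a i * epsOf (tensorE c1 c2 i) (x1, x2) := by
    intro x1 x2
    have h1' := sumIneq x1 x2
    have h2' := hlev2 x2
    have h3' := lz1 x1
    omega
  have hmem2 : (fun i => if i = i0 then l2 else 0) ∈ {lam : I → ℕ | ∑ i, a i * lam i = l2} := by
    simp [mul_ite, Finset.sum_ite_eq', ha0]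
  have hmem1 : (fun i => if i = i0 then l1 else 0) ∈ {lam : I → ℕ | ∑ i, a i * lam i = l1} := by
    simp [mul_ite, Finset.sum_ite_eq', ha0]
  obtain ⟨b2m, hb2mS, hb2mE⟩ := h2.eps_bij.surjOn hmem2
  obtain ⟨b1m, hb1mS, hb1mE⟩ := h1.phi_bij.surjOn hmem1
  have heps2m : ∀ i, c2.eps i b2m = if i = i0 then l2 else 0 := fun i => congrFun hb2mE i
  have hphi1m : ∀ i, c1.phi i b1m = if i = i0 then l1 else 0 := fun i => congrFun hb1mE i
  have hle1m : ∀ i, c1.phi i b1m ≤ c2.eps i b2m := by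
    intro i
    rw [heps2m, hphi1m]
    split <;> omega
  have hA1m : ∑ i, a i * c1.eps i b1m = l1 := hb1mS
  have hA2m : ∑ i, a i * c2.eps i b2m = l2 := hb2mS
  have hTm : ∑ i, a i * epsOf (tensorE c1 c2 i) (b1m, b2m) = l2 := by
    have hq := sumEq b1m b2m hle1m
    have hz := lz1 b1m
    omega
  have hTlev : tensorLev a c1 c2 = l2 := by
    refine le_antisymm (Nat.sInf_le ⟨(b1m, b2m), hTm⟩)
      (le_csInf ⟨l2, ⟨(b1m, b2m), hTm⟩⟩ ?_)
    rintro x ⟨⟨x1, x2⟩, rfl⟩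
    exact lower x1 x2
  have forward : (∑ i, a i * epsOf (tensorE c1 c2 i) (b1, b2)) = tensorLev a c1 c2 →
      (∑ i, a i * c2.eps i b2 = l2) ∧ ∀ i, c1.phi i b1 ≤ c2.eps i b2 := by
    intro hmin
    rw [hTlev] at hmin
    have hi := sumIneq b1 b2
    have hl := hlev2 b2
    have hz := lz1 b1
    have hA2 : ∑ i, a i * c2.eps i b2 = l2 := by omega
    refine ⟨hA2, ?_⟩
    have hEq : ∑ i, (a i * c1.eps i b1 + a i * c2.eps i b2)
        = ∑ i, (a i * epsOf (tensorE c1 c2 i) (b1, b2) + a i * c1.phi i b1) := by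
      rw [Finset.sum_add_distrib, Finset.sum_add_distrib]
      omega
    have hterm := (Finset.sum_eq_sum_iff_of_le (fun i _ => term_le b1 b2 i)).mp hEq
    intro i
    have h' := hterm i (Finset.mem_univ i)
    rw [hE b1 b2 i] at h'
    have h'' : a i * (c1.eps i b1 + c2.eps i b2)
        = a i * (c1.eps i b1 + (c2.eps i b2 - c1.phi i b1) + c1.phi i b1) := by
      rw [mul_add, mul_add]
      exact h'
    have h3 := Nat.eq_of_mul_eq_mul_left (ha i) h''
    omega
  constructor
  · constructor
    · intro hmin
      obtain ⟨hA2, hphile⟩ := forward hmin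
      refine ⟨?_, hphile⟩
      rw [h2.lev_eq]
      exact hA2
    · rintro ⟨hm, hphile⟩
      rw [h2.lev_eq] at hm
      have hA2 : ∑ i, a i * c2.eps i b2 = l2 := hm
      rw [hTlev]
      have hq := sumEq b1 b2 hphile
      have hz := lz1 b1
      omega
  · intro hmin i
    obtain ⟨hA2, hphile⟩ := forward hmin
    have hle'' := hphile i
    constructor
    · rw [hE b1 b2 i]
      omega
    · rw [hF b1 b2 i]
      omega
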